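/- Let φ : [0,∞) → [0,∞) be continuous, nondecreasing, concave with φ(0) = 0, and suppose φ satisfies: for all ε > 0, ∫_0^{1/4} φ(ε G(λ)) dλ ≤ φ(C ε) for some constant C, where G(λ) = m{y : sin²(y/2)/y² > λ}. Then the Lorentz norm of D_n(x) = sin²(nx/2)/(n²x²), defined by ‖D_n‖_{Λ(φ)} = ∫_0^∞ φ(m{x : D_n(x) > λ}) dλ, satisfies c φ(1/n) ≤ ‖D_n‖_{Λ(φ)} ≤ φ(C/n) for an absolute constant c (the lower bound from concavity and φ(κ/n) ≥ min(κ,1)φ(1/n)). -/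

import Mathlib

open MeasureTheory
open scoped ENNReal

private lemma fejD_le_quarter (y : ℝ) :
    (if y = 0 then (1 / 4 : ℝ) else (Real.sin (y / 2)) ^ 2 / y ^ 2) ≤ 1 / 4 := by
  split_ifs with h
  · exact le_rfl
  · have hy2 : (0:ℝ) < y ^ 2 := by positivity
    rw [div_le_iff₀ hy2]
    have h1 : |Real.sin (y/2)| ≤ |y/2| := Real.abs_sin_le_abs
    have h2 : Real.sin (y/2) ^ 2 ≤ (y/2)^2 := by
      rw [← sq_abs, ← sq_abs (y/2)]
      exact pow_le_pow_left₀ (abs_nonneg _) h1 2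
    nlinarith

private lemma fejD_gt_eighth (y : ℝ) (hy : y ∈ Set.Ioo (-1:ℝ) 1) :
    (1/8 : ℝ) < (if y = 0 then (1 / 4 : ℝ) else (Real.sin (y / 2)) ^ 2 / y ^ 2) := by
  split_ifs with h
  · norm_num
  · have hsq : Real.sin (y/2) ^ 2 = Real.sin (|y|/2) ^ 2 := by
      rcases abs_cases y with ⟨he, _⟩ | ⟨he, _⟩
      · rw [he]
      · rw [he]
        rw [show -y/2 = -(y/2) by ring, Real.sin_neg]
        ring
    have hy0 : 0 < |y| := abs_pos.2 h
    have hy1 : |y| < 1 := abs_lt.2 ⟨hy.1, hy.2⟩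
    have ht : 0 < |y|/2 := by linarith
    have ht1 : |y|/2 ≤ 1 := by linarith
    have hs := Real.sin_gt_sub_cube ht
    have hcube : 0 < (|y|/2) * ((1/2 - |y|/2) * (1/2 + |y|/2)) :=
      mul_pos ht (mul_pos (by linarith) (by linarith))
    have hlow : (15/16) * (|y|/2) ≤ Real.sin (|y|/2) := by nlinarith [hcube]
    have hy2 : (0:ℝ) < y^2 := by positivity
    rw [lt_div_iff₀ hy2, hsq]
    have hsp : 0 < Real.sin (|y|/2) := by nlinarith
    have : y^2 = |y|^2 := (sq_abs y).symm
    nlinarith [sq_nonneg (|y|)]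

private lemma fejD_subset (l : ℝ) (hl : 0 < l) :
    {y : ℝ | (if y = 0 then (1 / 4 : ℝ) else (Real.sin (y / 2)) ^ 2 / y ^ 2) > l}
      ⊆ Set.Icc (-Real.sqrt (1/l)) (Real.sqrt (1/l)) := by
  intro y hy
  simp only [Set.mem_setOf_eq] at hy
  have h : |y| ≤ Real.sqrt (1/l) := by
    split_ifs at hy with h0
    · subst h0; simpa using Real.sqrt_nonneg (1/l)
    · have hy2 : (0:ℝ) < y ^ 2 := by positivity
      have hs : Real.sin (y/2)^2 ≤ 1 := by
        rw [← sq_abs]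
        have := Real.abs_sin_le_one (y/2)
        nlinarith [abs_nonneg (Real.sin (y/2))]
      have : y^2 ≤ 1/l := by
        rw [gt_iff_lt, lt_div_iff₀ hy2] at hy
        rw [le_div_iff₀ hl]
        nlinarith
      exact Real.abs_le_sqrt this
  exact abs_le.1 h

/-- if the quasi-concave function `φ` satisfies condition (19),
then the Lorentz norm of the Fejér kernel `D_n` is two-sidedly comparable to
`φ` at `1/n`: `c φ(1/n) ≤ ‖D_n‖_{Λ(φ)} ≤ φ(C/n)`. -/
theorem fejer_lorentz_norm_two_sided
    (φ : ℝ → ℝ) (hφc : Continuous φ) (hφmono : Monotone φ)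
    (hφconc : ConcaveOn ℝ (Set.Ici 0) φ) (hφ0 : φ 0 = 0)
    (hφnonneg : ∀ t, 0 ≤ φ t)
    (G : ℝ → ℝ≥0∞)
    (hG : ∀ l : ℝ, G l = volume {y : ℝ |
      (if y = 0 then (1 / 4 : ℝ) else (Real.sin (y / 2)) ^ 2 / y ^ 2) > l})
    (C : ℝ) (hC : 0 < C)
    (hcond : ∀ ε : ℝ, 0 < ε →
      ∫ l in Set.Ioo (0 : ℝ) (1 / 4), φ (ε * (G l).toReal) ≤ φ (C * ε)) :
    ∃ c : ℝ, 0 < c ∧ ∀ n : ℕ, 1 ≤ n →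
      c * φ (1 / n) ≤
        (∫ l in Set.Ioi (0 : ℝ),
          φ ((volume {x : ℝ | (if x = 0 then (1 / 4 : ℝ)
            else (Real.sin (n * x / 2)) ^ 2 / ((n : ℝ) ^ 2 * x ^ 2)) > l}).toReal)) ∧
      (∫ l in Set.Ioi (0 : ℝ),
          φ ((volume {x : ℝ | (if x = 0 then (1 / 4 : ℝ)
            else (Real.sin (n * x / 2)) ^ 2 / ((n : ℝ) ^ 2 * x ^ 2)) > l}).toReal)) ≤
        φ (C / n) := by
  refine ⟨1/8, by norm_num, fun n hn => ?_⟩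
  have hn1 : (1:ℝ) ≤ (n:ℝ) := by exact_mod_cast hn
  have hn0 : (0:ℝ) < (n:ℝ) := by linarith
  have hnR : ((n:ℝ)) ≠ 0 := ne_of_gt hn0
  have hninv : (0:ℝ) < (n:ℝ)⁻¹ := by positivity
  -- rewrite the level sets via scaling
  have hkey : ∀ l : ℝ, volume {x : ℝ | (if x = 0 then (1 / 4 : ℝ)
      else (Real.sin (n * x / 2)) ^ 2 / ((n : ℝ) ^ 2 * x ^ 2)) > l}
      = ENNReal.ofReal (n:ℝ)⁻¹ * G l := by
    intro l
    have hset : {x : ℝ | (if x = 0 then (1 / 4 : ℝ)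
        else (Real.sin (n * x / 2)) ^ 2 / ((n : ℝ) ^ 2 * x ^ 2)) > l}
        = ((n:ℝ) * ·) ⁻¹' {y : ℝ |
          (if y = 0 then (1 / 4 : ℝ) else (Real.sin (y / 2)) ^ 2 / y ^ 2) > l} := by
      ext x
      simp only [Set.mem_preimage, Set.mem_setOf_eq]
      by_cases hx : x = 0
      · simp [hx]
      · rw [if_neg hx, if_neg (by simp [hnR, hx]), mul_pow]
    rw [hset, Real.volume_preimage_mul_left hnR, hG l, abs_of_nonneg hninv.le]
  simp only [hkey, ENNReal.toReal_mul, ENNReal.toReal_ofReal hninv.le]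
  set ψ : ℝ → ℝ := fun l => φ ((n:ℝ)⁻¹ * (G l).toReal) with hψ
  -- basic facts about G
  have hGanti : Antitone G := by
    intro a b hab
    rw [hG, hG]
    exact measure_mono (fun y hy => lt_of_le_of_lt hab hy)
  have hM : Measurable fun l => (n:ℝ)⁻¹ * (G l).toReal :=
    (hGanti.measurable.ennreal_toReal).const_mul _
  have hψmeas : Measurable ψ := hφc.measurable.comp hM
  have hGfin : ∀ l : ℝ, 0 < l → G l ≠ ∞ := by
    intro l hl
    rw [hG l]
    exact ((measure_mono (fejD_subset l hl)).trans_lt measure_Icc_lt_top).ne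
  have hG0 : ∀ l : ℝ, (1/4:ℝ) ≤ l → G l = 0 := by
    intro l hl
    rw [hG l]
    have he : {y : ℝ | (if y = 0 then (1 / 4 : ℝ)
        else (Real.sin (y / 2)) ^ 2 / y ^ 2) > l} = ∅ :=
      Set.eq_empty_iff_forall_notMem.2 (fun y hy =>
        absurd (lt_of_le_of_lt hl hy) (not_lt.2 (fejD_le_quarter y)))
    rw [he]
    exact measure_empty
  have hGlb : ∀ l : ℝ, l < 1/8 → ENNReal.ofReal 2 ≤ G l := by
    intro l hl
    rw [hG l]
    calc ENNReal.ofReal 2 = volume (Set.Ioo (-1:ℝ) 1) := by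
          rw [Real.volume_Ioo]; norm_num
      _ ≤ _ := measure_mono (fun y hy => lt_trans hl (fejD_gt_eighth y hy))
  -- linear bound on φ
  have key2 : ∀ t : ℝ, 0 ≤ t → φ t ≤ φ 1 * (1 + t) := by
    intro t ht
    rcases le_or_gt t 1 with h | h
    · have := hφmono h
      nlinarith [hφnonneg 1]
    · have h0 : (0:ℝ) < t := by linarith
      have ha : (0:ℝ) ≤ 1 - 1/t := by
        have : 1/t ≤ 1 := by rw [div_le_one h0]; linarith
        linarith
      have hb : (0:ℝ) ≤ 1/t := by positivity
      have hab : (1 - 1/t) + 1/t = 1 := by ring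
      have hc := hφconc.2 (Set.self_mem_Ici) (Set.mem_Ici.2 h0.le) ha hb hab
      rw [smul_eq_mul, smul_eq_mul, smul_eq_mul, smul_eq_mul, hφ0] at hc
      have ht1 : (1 - 1/t) * 0 + (1/t) * t = 1 := by field_simp; ring
      rw [ht1] at hc
      have h2 : (1/t) * φ t ≤ φ 1 := by linarith
      have h3 : φ t ≤ t * φ 1 := by
        rw [div_mul_eq_mul_div, div_le_iff₀ h0] at h2
        linarith [h2]
      nlinarith [hφnonneg 1]
  -- domination on (0, 1/4)
  have hbound : ∀ l ∈ Set.Ioo (0:ℝ) (1/4), ‖ψ l‖ ≤ φ 1 * (1 + 2 * Real.sqrt (1/l)) := by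
    intro l hl
    rw [Real.norm_of_nonneg (hφnonneg _)]
    have hv : G l ≤ ENNReal.ofReal (2 * Real.sqrt (1/l)) := by
      rw [hG l]
      refine (measure_mono (fejD_subset l hl.1)).trans ?_
      rw [Real.volume_Icc]
      exact ENNReal.ofReal_le_ofReal (by ring_nf; rfl)
    have ht : (G l).toReal ≤ 2 * Real.sqrt (1/l) :=
      ENNReal.toReal_le_of_le_ofReal (by positivity) hv
    have h1 : (n:ℝ)⁻¹ ≤ 1 := by
      rw [inv_le_one_iff₀]; right; exact hn1
    have harg : (n:ℝ)⁻¹ * (G l).toReal ≤ 2 * Real.sqrt (1/l) := by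
      nlinarith [ENNReal.toReal_nonneg (a := G l)]
    calc ψ l ≤ φ (2 * Real.sqrt (1/l)) := hφmono harg
      _ ≤ φ 1 * (1 + 2 * Real.sqrt (1/l)) := key2 _ (by positivity)
  -- integrability of the dominating function
  have hrint : IntegrableOn (fun l : ℝ => Real.sqrt (1/l)) (Set.Ioo (0:ℝ) (1/4)) := by
    have h1 : IntervalIntegrable (fun x : ℝ => x ^ (-(1/2) : ℝ)) volume 0 (1/4) :=
      intervalIntegral.intervalIntegrable_rpow' (by norm_num)
    have h2 : IntegrableOn (fun x : ℝ => x ^ (-(1/2):ℝ)) (Set.Ioo (0:ℝ) (1/4)) :=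
      h1.1.mono_set Set.Ioo_subset_Ioc_self
    refine h2.congr_fun (fun l hl => ?_) measurableSet_Ioo
    have hsq : Real.sqrt (1/l) = (1/l) ^ ((2:ℝ))⁻¹ := by
      rw [Real.sqrt_eq_rpow]; norm_num
    rw [hsq, one_div l, Real.inv_rpow hl.1.le, ← Real.rpow_neg hl.1.le]
    congr 1
    norm_num
  have hgint : IntegrableOn (fun l : ℝ => φ 1 * (1 + 2 * Real.sqrt (1/l)))
      (Set.Ioo (0:ℝ) (1/4)) := by
    refine Integrable.const_mul ?_ (φ 1)
    exact (integrableOn_const measure_Ioo_lt_top.ne).add (hrint.const_mul 2)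
  have hint1 : IntegrableOn ψ (Set.Ioo (0:ℝ) (1/4)) := by
    refine Integrable.mono' hgint hψmeas.aestronglyMeasurable.restrict ?_
    exact (ae_restrict_iff' measurableSet_Ioo).2 (Filter.Eventually.of_forall hbound)
  have hψzero : Set.EqOn ψ 0 (Set.Ici (1/4:ℝ)) := by
    intro l hl
    simp only [hψ, Pi.zero_apply]
    rw [hG0 l hl]
    simpa using hφ0
  have hint2 : IntegrableOn ψ (Set.Ici (1/4:ℝ)) :=
    (integrableOn_congr_fun hψzero measurableSet_Ici).2 (integrableOn_zero)
  have hdisj : Disjoint (Set.Ioo (0:ℝ) (1/4)) (Set.Ici (1/4:ℝ)) :=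
    (Set.Iio_disjoint_Ici le_rfl).mono_left Set.Ioo_subset_Iio_self
  have hunion : Set.Ioo (0:ℝ) (1/4) ∪ Set.Ici (1/4:ℝ) = Set.Ioi (0:ℝ) :=
    Set.Ioo_union_Ici_eq_Ioi (by norm_num)
  have hIoi : IntegrableOn ψ (Set.Ioi (0:ℝ)) := by
    rw [← hunion]; exact hint1.union hint2
  have hsplit : ∫ l in Set.Ioi (0:ℝ), ψ l = ∫ l in Set.Ioo (0:ℝ) (1/4), ψ l := by
    rw [← hunion, setIntegral_union hdisj measurableSet_Ici hint1 hint2,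
      setIntegral_congr_fun measurableSet_Ici hψzero]
    simp
  constructor
  · -- lower bound
    have step1 : (1/8 : ℝ) * φ (1/(n:ℝ)) = ∫ _ in Set.Ioo (0:ℝ) (1/8), φ (1/(n:ℝ)) := by
      rw [setIntegral_const, Real.volume_real_Ioo, smul_eq_mul]
      norm_num
    rw [step1]
    have step2 : (∫ _ in Set.Ioo (0:ℝ) (1/8), φ (1/(n:ℝ)))
        ≤ ∫ l in Set.Ioo (0:ℝ) (1/8), ψ l := by
      refine setIntegral_mono_on (integrableOn_const measure_Ioo_lt_top.ne)
        (hint1.mono_set (Set.Ioo_subset_Ioo_right (by norm_num))) measurableSet_Ioo ?_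
      intro l hl
      have h2 : (2:ℝ) ≤ (G l).toReal := by
        have := ENNReal.toReal_mono (hGfin l hl.1) (hGlb l hl.2)
        rwa [ENNReal.toReal_ofReal (by norm_num : (0:ℝ) ≤ 2)] at this
      refine hφmono ?_
      rw [one_div]
      nlinarith
    refine step2.trans ?_
    refine setIntegral_mono_set hIoi ?_ ?_
    · exact (ae_restrict_iff' measurableSet_Ioi).2
        (Filter.Eventually.of_forall (fun l _ => hφnonneg _))
    · exact HasSubset.Subset.eventuallyLE (fun l hl => hl.1)
  · -- upper bound
    rw [hsplit]
    have := hcond ((n:ℝ)⁻¹) hninv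
    rwa [show C * (n:ℝ)⁻¹ = C / n by ring] at this
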